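/- Let ζ ∈ ℂ be a primitive 5th root of unity and define Q : ℤ × ℤ → ℂ by Q(m,n) = (−1)^(n²) · ζ^(m² + 2mn). Then for S = {(1,0), (3,1), (2,1), (5,3), (3,2), (4,3), (1,1), (0,1)}, every Q(α) with α ∈ S is a root of unity, and the product over α ∈ S of the multiplicative order of Q(α) equals 2⁶·5⁴ = 40000. -/

import Mathlib

theorem stmt_8 (ζ : ℂ) (hζ : IsPrimitiveRoot ζ 5)
    (Q : ℤ × ℤ → ℂ) (hQ : ∀ m n : ℤ, Q (m, n) = (-1 : ℂ) ^ (n^2) * ζ ^ (m^2 + 2*m*n))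
    (S : Finset (ℤ × ℤ)) (hS : S = {(1,0), (3,1), (2,1), (5,3), (3,2), (4,3), (1,1), (0,1)}) :
    (∀ α ∈ S, IsOfFinOrder (Q α)) ∧ ∏ α ∈ S, orderOf (Q α) = 2^6 * 5^4 := by
  have ho : orderOf ζ = 5 := hζ.eq_orderOf.symm
  have h5 : ζ ^ 5 = 1 := hζ.pow_eq_one
  have hpow : ∀ k : ℕ, ζ ^ (k : ℤ) = ζ ^ (k % 5) := by
    intro k
    rw [zpow_natCast, ← ho, pow_mod_orderOf]
  have hneg : orderOf (-1 : ℂ) = 2 := by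
    rw [orderOf_neg_one]
    simp [ringChar.eq_zero]
  have h3 : orderOf (ζ ^ 3) = 5 := (hζ.pow_of_coprime 3 (by norm_num)).eq_orderOf.symm
  have hmix : orderOf (-ζ ^ 3) = 10 := by
    have := (Commute.all (-1 : ℂ) (ζ ^ 3)).orderOf_mul_eq_mul_orderOf_of_coprime
      (by rw [hneg, h3]; norm_num)
    rw [hneg, h3] at this
    simpa using this
  have e1 : Q (1, 0) = ζ := by rw [hQ]; norm_num
  have e2 : Q (3, 1) = -1 := by
    rw [hQ]; norm_num
    rw [show (15:ℕ) = 5*3 by norm_num, pow_mul, h5, one_pow]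
  have e3 : Q (2, 1) = -ζ ^ 3 := by
    rw [hQ]; norm_num
    rw [show (8:ℕ) = 5+3 by norm_num, pow_add, h5, one_mul]
  have e4 : Q (5, 3) = -1 := by
    rw [hQ]; norm_num
    rw [show (55:ℕ) = 5*11 by norm_num, pow_mul, h5, one_pow]
  have e5 : Q (3, 2) = ζ := by
    rw [hQ]; norm_num
    rw [show (21:ℕ) = 5*4+1 by norm_num, pow_add, pow_mul, h5, one_pow, one_mul, pow_one]
  have e6 : Q (4, 3) = -1 := by
    rw [hQ]; norm_num
    rw [show (40:ℕ) = 5*8 by norm_num, pow_mul, h5, one_pow]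
  have e7 : Q (1, 1) = -ζ ^ 3 := by
    rw [hQ]; norm_num
  have e8 : Q (0, 1) = -1 := by rw [hQ]; norm_num
  subst hS
  constructor
  · intro α hα
    fin_cases hα <;>
      simp only [e1, e2, e3, e4, e5, e6, e7, e8] <;>
      refine isOfFinOrder_iff_pow_eq_one.mpr ?_ <;>
      · have h10 : ζ ^ 10 = 1 := by rw [show (10:ℕ) = 5*2 by norm_num, pow_mul, h5, one_pow]
        have h30 : ζ ^ 30 = 1 := by rw [show (30:ℕ) = 5*6 by norm_num, pow_mul, h5, one_pow]
        exact ⟨10, by norm_num, by ring_nf <;> simp [h10, h30]⟩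
  · rw [Finset.prod_insert (by decide), Finset.prod_insert (by decide),
      Finset.prod_insert (by decide), Finset.prod_insert (by decide),
      Finset.prod_insert (by decide), Finset.prod_insert (by decide),
      Finset.prod_insert (by decide), Finset.prod_singleton,
      e1, e2, e3, e4, e5, e6, e7, e8, ho, hneg, hmix]
    norm_num
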